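/- For every transversal double point of two C² planar arcs, neither of which has horizontal or vertical tangent at the double point, there exists an intersection parallelogram: a parallelogram P with horizontal top and bottom sides containing the double point in its interior, such that one arc crosses each horizontal side of P exactly once, the other arc crosses each of the two non-horizontal sides exactly once, and neither arc passes through a corner of P. -/

import Mathlib

/-- The solid parallelogram with center `q`, horizontal half-width `L`, vertical
half-height `H`, and non-horizontal sides of direction `(d, 1)`. -/
def paraSet (q : ℝ × ℝ) (d L H : ℝ) : Set (ℝ × ℝ) :=
  {x | ∃ u v : ℝ, |u| ≤ L ∧ |v| ≤ H ∧ x = (q.1 + u + v * d, q.2 + v)}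

/-- The corner of the parallelogram with signs `e₁, e₂ ∈ {±1}`. -/
def paraCorner (q : ℝ × ℝ) (d L H e₁ e₂ : ℝ) : ℝ × ℝ :=
  (q.1 + e₁ * L + e₂ * H * d, q.2 + e₂ * H)

/-- The four corners of the parallelogram. -/
def paraCorners (q : ℝ × ℝ) (d L H : ℝ) : Set (ℝ × ℝ) :=
  {paraCorner q d L H 1 1, paraCorner q d L H 1 (-1),
    paraCorner q d L H (-1) 1, paraCorner q d L H (-1) (-1)}

/-- `CrossingPattern vert horiz q d L H` : the arc `vert` crosses each horizontal side
of the parallelogram exactly once, the arc `horiz` crosses each of the two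
non-horizontal sides exactly once, and neither arc passes through a corner. -/
def CrossingPattern (vert horiz : ℝ → ℝ × ℝ) (q : ℝ × ℝ) (d L H : ℝ) : Prop :=
  (∃! t, t ∈ Set.Icc (0 : ℝ) 1 ∧
      vert t ∈ segment ℝ (paraCorner q d L H (-1) 1) (paraCorner q d L H 1 1)) ∧
  (∃! t, t ∈ Set.Icc (0 : ℝ) 1 ∧
      vert t ∈ segment ℝ (paraCorner q d L H (-1) (-1)) (paraCorner q d L H 1 (-1))) ∧
  (∃! s, s ∈ Set.Icc (0 : ℝ) 1 ∧
      horiz s ∈ segment ℝ (paraCorner q d L H (-1) (-1)) (paraCorner q d L H (-1) 1)) ∧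
  (∃! s, s ∈ Set.Icc (0 : ℝ) 1 ∧
      horiz s ∈ segment ℝ (paraCorner q d L H 1 (-1)) (paraCorner q d L H 1 1)) ∧
  (∀ t ∈ Set.Icc (0 : ℝ) 1, vert t ∉ paraCorners q d L H) ∧
  (∀ s ∈ Set.Icc (0 : ℝ) 1, horiz s ∉ paraCorners q d L H)

open Set

/-- Membership in a horizontal side. -/
lemma mem_horiz_side {q : ℝ × ℝ} {d L H e₂ : ℝ} (hL : 0 < L) (x : ℝ × ℝ) :
    x ∈ segment ℝ (paraCorner q d L H (-1) e₂) (paraCorner q d L H 1 e₂) ↔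
      x.2 = q.2 + e₂ * H ∧ |x.1 - (q.1 + e₂ * H * d)| ≤ L := by
  rw [segment_eq_image]
  constructor
  · rintro ⟨θ, hθ, rfl⟩
    simp only [paraCorner, Prod.smul_mk, smul_eq_mul, Prod.mk_add_mk]
    constructor
    · ring
    · have : (1 - θ) * (q.1 + -1 * L + e₂ * H * d) + θ * (q.1 + 1 * L + e₂ * H * d)
          - (q.1 + e₂ * H * d) = (2 * θ - 1) * L := by ring
      rw [this, abs_mul]
      have h1 : |2 * θ - 1| ≤ 1 := by
        rw [abs_le]; constructor <;> nlinarith [hθ.1, hθ.2]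
      calc |2 * θ - 1| * |L| ≤ 1 * |L| := by
            exact mul_le_mul_of_nonneg_right h1 (abs_nonneg L)
        _ = L := by rw [one_mul, abs_of_pos hL]
  · rintro ⟨hy, hx⟩
    refine ⟨(x.1 - (q.1 + e₂ * H * d)) / (2 * L) + 1 / 2, ⟨?_, ?_⟩, ?_⟩
    · rw [abs_le] at hx
      have := hx.1
      have h2L : (0:ℝ) < 2 * L := by linarith
      rw [div_add' _ _ _ (by positivity), le_div_iff₀ h2L] at *
      nlinarith
    · rw [abs_le] at hx
      have := hx.2
      have h2L : (0:ℝ) < 2 * L := by linarith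
      rw [div_add' _ _ _ (by positivity), div_le_iff₀ h2L]
      nlinarith
    · simp only [paraCorner, Prod.smul_mk, smul_eq_mul, Prod.mk_add_mk]
      have hx2 : x = (x.1, x.2) := rfl
      rw [hx2, hy, Prod.mk.injEq]
      constructor
      · field_simp; ring
      · ring

/-- Membership in a non-horizontal (slanted) side. -/
lemma mem_vert_side {q : ℝ × ℝ} {d L H e₁ : ℝ} (hH : 0 < H) (x : ℝ × ℝ) :
    x ∈ segment ℝ (paraCorner q d L H e₁ (-1)) (paraCorner q d L H e₁ 1) ↔
      x.1 - d * (x.2 - q.2) = q.1 + e₁ * L ∧ |x.2 - q.2| ≤ H := by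
  rw [segment_eq_image]
  constructor
  · rintro ⟨θ, hθ, rfl⟩
    simp only [paraCorner, Prod.smul_mk, smul_eq_mul, Prod.mk_add_mk]
    constructor
    · ring
    · have : (1 - θ) * (q.2 + -1 * H) + θ * (q.2 + 1 * H) - q.2 = (2 * θ - 1) * H := by ring
      rw [this, abs_mul]
      have h1 : |2 * θ - 1| ≤ 1 := by
        rw [abs_le]; constructor <;> nlinarith [hθ.1, hθ.2]
      calc |2 * θ - 1| * |H| ≤ 1 * |H| := mul_le_mul_of_nonneg_right h1 (abs_nonneg H)
        _ = H := by rw [one_mul, abs_of_pos hH]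
  · rintro ⟨hx, hy⟩
    refine ⟨(x.2 - q.2) / (2 * H) + 1 / 2, ⟨?_, ?_⟩, ?_⟩
    · rw [abs_le] at hy
      have := hy.1
      have h2H : (0:ℝ) < 2 * H := by linarith
      rw [div_add' _ _ _ (by positivity), le_div_iff₀ h2H]
      nlinarith
    · rw [abs_le] at hy
      have := hy.2
      have h2H : (0:ℝ) < 2 * H := by linarith
      rw [div_add' _ _ _ (by positivity), div_le_iff₀ h2H]
      nlinarith
    · simp only [paraCorner, Prod.smul_mk, smul_eq_mul, Prod.mk_add_mk]
      have hx2 : x = (x.1, x.2) := rfl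
      rw [hx2, Prod.mk.injEq]
      constructor
      · have : x.1 = q.1 + e₁ * L + d * (x.2 - q.2) := by linarith [hx]
        rw [this]; field_simp; ring
      · field_simp; ring

/-- Outside a `δ`-interval around `t₀`, an injective continuous arc stays away from `γ t₀`. -/
lemma far_from (γ : ℝ → ℝ × ℝ) (hc : Continuous γ) (t₀ : ℝ) (h0 : t₀ ∈ Icc (0:ℝ) 1)
    (hinj : Set.InjOn γ (Icc 0 1)) (δ : ℝ) (hδ : 0 < δ) :
    ∃ ε > 0, ∀ t ∈ Icc (0:ℝ) 1, dist (γ t) (γ t₀) < ε → |t - t₀| ≤ δ := by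
  set K : Set ℝ := Icc 0 1 ∩ {t | δ ≤ |t - t₀|} with hK
  have hKc : IsCompact K := isCompact_Icc.inter_right (isClosed_le continuous_const
    (continuous_abs.comp (continuous_id.sub continuous_const)))
  rcases K.eq_empty_or_nonempty with hKe | hKne
  · refine ⟨1, one_pos, fun t ht _ => ?_⟩
    by_contra h
    have : t ∈ K := ⟨ht, le_of_lt (by rwa [not_le] at h)⟩
    simp [hKe] at this
  · obtain ⟨tm, htmK, htm⟩ := hKc.exists_isMinOn hKne
      (Continuous.continuousOn (by continuity : Continuous fun t => dist (γ t) (γ t₀)))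
    refine ⟨dist (γ tm) (γ t₀), ?_, fun t ht hd => ?_⟩
    · rw [gt_iff_lt, dist_pos]
      intro hEq
      have htm0 : tm ≠ t₀ := by
        intro h; rw [h] at htmK
        have := htmK.2
        simp only [mem_setOf_eq, sub_self, abs_zero] at this
        linarith
      exact htm0 (hinj htmK.1 h0 hEq)
    · by_contra h
      have htK : t ∈ K := ⟨ht, le_of_lt (by rwa [not_le] at h)⟩
      have := htm htK
      simp only [Function.comp] at this
      exact absurd (lt_of_le_of_lt this hd) (lt_irrefl _)

/-- Quantitative local behaviour of a C¹ function with positive derivative. -/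
lemma key_pos (f : ℝ → ℝ) (t₀ : ℝ) (hf : ContDiff ℝ 1 f) (hf' : 0 < deriv f t₀)
    (δ₀ : ℝ) (hδ₀ : 0 < δ₀) :
    ∃ δ : ℝ, 0 < δ ∧ δ ≤ δ₀ ∧
      (∀ ⦃t t'⦄, t ∈ Icc (t₀ - δ) (t₀ + δ) → t' ∈ Icc (t₀ - δ) (t₀ + δ) →
        |deriv f t₀| / 2 * |t - t'| ≤ |f t - f t'|) ∧
      (∀ c, |c - f t₀| ≤ |deriv f t₀| / 2 * δ → ∃ t ∈ Icc (t₀ - δ) (t₀ + δ), f t = c) := by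
  set m := deriv f t₀ / 2 with hm
  have hmpos : 0 < m := by positivity
  have hcont : Continuous (deriv f) := hf.continuous_deriv le_rfl
  have : ∀ᶠ t in nhds t₀, deriv f t ∈ Ioo m (deriv f t₀ + m) := by
    apply hcont.continuousAt.eventually_mem
    exact Ioo_mem_nhds (by linarith) (by linarith)
  obtain ⟨δ₁, hδ₁pos, hδ₁⟩ := Metric.eventually_nhds_iff.mp this
  set δ := min (δ₁ / 2) δ₀ with hδdef
  have hδpos : 0 < δ := lt_min (by linarith) hδ₀
  have hδle : δ ≤ δ₀ := min_le_right _ _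
  have hball : ∀ t ∈ Icc (t₀ - δ) (t₀ + δ), m < deriv f t := by
    intro t ht
    have : dist t t₀ < δ₁ := by
      rw [Real.dist_eq, abs_lt]
      constructor <;> [linarith [ht.1, min_le_left (δ₁/2) δ₀]; linarith [ht.2, min_le_left (δ₁/2) δ₀]]
    exact (hδ₁ this).1
  have hmono : ∀ ⦃a b⦄, a ∈ Icc (t₀ - δ) (t₀ + δ) → b ∈ Icc (t₀ - δ) (t₀ + δ) → a < b →
      m * (b - a) ≤ f b - f a := by
    intro a b ha hb hab
    obtain ⟨c, hc, hceq⟩ := exists_deriv_eq_slope f hab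
      (hf.continuous.continuousOn) (hf.differentiable one_ne_zero |>.differentiableOn)
    have hcI : c ∈ Icc (t₀ - δ) (t₀ + δ) := ⟨by linarith [hc.1, ha.1], by linarith [hc.2, hb.2]⟩
    have := hball c hcI
    have hslope : m < (f b - f a) / (b - a) := hceq ▸ this
    rw [lt_div_iff₀ (by linarith)] at hslope
    linarith
  have habs : |deriv f t₀| / 2 = m := by rw [hm, abs_of_pos hf']
  refine ⟨δ, hδpos, hδle, ?_, ?_⟩
  · intro t t' ht ht'
    rw [habs]
    rcases lt_trichotomy t t' with h | h | h
    · have := hmono ht ht' h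
      rw [abs_of_neg (by linarith : t - t' < 0), abs_of_neg (by nlinarith : f t - f t' < 0)]
      nlinarith
    · simp [h]
    · have := hmono ht' ht h
      rw [abs_of_pos (by linarith : (0:ℝ) < t - t'), abs_of_pos]
      · nlinarith
      · nlinarith
  · intro c hc
    rw [habs] at hc
    have h1 : f t₀ - f (t₀ - δ) ≥ m * δ := by
      have := hmono (a := t₀ - δ) (b := t₀) ⟨le_refl _, by linarith⟩
        ⟨by linarith, by linarith⟩ (by linarith)
      linarith
    have h2 : f (t₀ + δ) - f t₀ ≥ m * δ := by
      have := hmono (a := t₀) (b := t₀ + δ) ⟨by linarith, by linarith⟩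
        ⟨by linarith, le_refl _⟩ (by linarith)
      linarith
    have hsub : c ∈ Icc (f (t₀ - δ)) (f (t₀ + δ)) := by
      rw [abs_le] at hc
      constructor <;> nlinarith [hc.1, hc.2]
    have := intermediate_value_Icc (by linarith : t₀ - δ ≤ t₀ + δ) hf.continuous.continuousOn
    obtain ⟨t, htI, htc⟩ := this hsub
    exact ⟨t, htI, htc⟩

lemma key (f : ℝ → ℝ) (t₀ : ℝ) (hf : ContDiff ℝ 1 f) (hf' : deriv f t₀ ≠ 0)
    (δ₀ : ℝ) (hδ₀ : 0 < δ₀) :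
    ∃ δ : ℝ, 0 < δ ∧ δ ≤ δ₀ ∧
      (∀ ⦃t t'⦄, t ∈ Icc (t₀ - δ) (t₀ + δ) → t' ∈ Icc (t₀ - δ) (t₀ + δ) →
        |deriv f t₀| / 2 * |t - t'| ≤ |f t - f t'|) ∧
      (∀ c, |c - f t₀| ≤ |deriv f t₀| / 2 * δ → ∃ t ∈ Icc (t₀ - δ) (t₀ + δ), f t = c) := by
  rcases lt_or_gt_of_ne hf' with h | h
  · have hneg : 0 < deriv (fun t => -f t) t₀ := by
      rw [show (fun t => -f t) = -f from rfl, deriv.neg]; linarith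
    obtain ⟨δ, h1, h2, h3, h4⟩ := key_pos (fun t => -f t) t₀ hf.neg hneg δ₀ hδ₀
    have habs : |deriv (fun t => -f t) t₀| = |deriv f t₀| := by rw [show (fun t => -f t) = -f from rfl, deriv.neg, abs_neg]
    refine ⟨δ, h1, h2, fun t t' ht ht' => ?_, fun c hc => ?_⟩
    · have := h3 ht ht'
      rwa [habs, show -f t - -f t' = -(f t - f t') by ring, abs_neg] at this
    · obtain ⟨t, htI, htc⟩ := h4 (-c) (by
        rwa [habs, show -c - -f t₀ = -(c - f t₀) by ring, abs_neg])
      exact ⟨t, htI, by linarith⟩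
  · exact key_pos f t₀ hf h δ₀ hδ₀

/-- little-o extraction. -/
lemma littleo_bound (f : ℝ → ℝ) (t₀ f' : ℝ) (hf : HasDerivAt f f' t₀) (c : ℝ) (hc : 0 < c) :
    ∃ δ > 0, ∀ t, |t - t₀| ≤ δ → |f t - f t₀ - (t - t₀) * f'| ≤ c * |t - t₀| := by
  have h := hasDerivAt_iff_isLittleO.mp hf
  have h2 := h.def hc
  obtain ⟨δ, hδ, hball⟩ := Metric.eventually_nhds_iff.mp h2
  refine ⟨δ / 2, by linarith, fun t ht => ?_⟩
  have : dist t t₀ < δ := by rw [Real.dist_eq]; linarith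
  have := hball this
  simpa [Real.norm_eq_abs, smul_eq_mul, mul_comm] using this


set_option maxHeartbeats 1000000 in
/-- every transversal double point of two C² planar arcs, neither of which
has horizontal or vertical tangent there, admits an intersection parallelogram: a
parallelogram with horizontal top and bottom sides containing the double point in its
interior, such that one arc crosses each horizontal side exactly once, the other arc
crosses each of the two non-horizontal sides exactly once, and neither arc passes
through a corner. -/
theorem exists_intersection_parallelogram
    (γ₁ γ₂ : ℝ → ℝ × ℝ) (t₀ s₀ : ℝ)
    (hγ₁ : ContDiff ℝ 2 γ₁) (hγ₂ : ContDiff ℝ 2 γ₂)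
    (hinj₁ : Set.InjOn γ₁ (Set.Icc 0 1)) (hinj₂ : Set.InjOn γ₂ (Set.Icc 0 1))
    (ht₀ : t₀ ∈ Set.Ioo (0 : ℝ) 1) (hs₀ : s₀ ∈ Set.Ioo (0 : ℝ) 1)
    (hmeet : γ₁ t₀ = γ₂ s₀)
    (htrans : (deriv γ₁ t₀).1 * (deriv γ₂ s₀).2 - (deriv γ₁ t₀).2 * (deriv γ₂ s₀).1 ≠ 0)
    (h1x : (deriv γ₁ t₀).1 ≠ 0) (h1y : (deriv γ₁ t₀).2 ≠ 0)
    (h2x : (deriv γ₂ s₀).1 ≠ 0) (h2y : (deriv γ₂ s₀).2 ≠ 0) :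
    ∃ d L H : ℝ, 0 < L ∧ 0 < H ∧
      γ₁ t₀ ∈ interior (paraSet (γ₁ t₀) d L H) ∧
      (CrossingPattern γ₁ γ₂ (γ₁ t₀) d L H ∨ CrossingPattern γ₂ γ₁ (γ₁ t₀) d L H) := by
  obtain ⟨ht0a, ht0b⟩ := ht₀
  obtain ⟨hs0a, hs0b⟩ := hs₀
  set q : ℝ × ℝ := γ₁ t₀ with hqdef
  set p₁ : ℝ × ℝ := deriv γ₁ t₀ with hp1
  set p₂ : ℝ × ℝ := deriv γ₂ s₀ with hp2
  set d : ℝ := p₁.1 / p₁.2 with hddef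
  have hder₁ : HasDerivAt γ₁ p₁ t₀ := (hγ₁.differentiable (by norm_num) t₀).hasDerivAt
  have hder₂ : HasDerivAt γ₂ p₂ s₀ := (hγ₂.differentiable (by norm_num) s₀).hasDerivAt
  set f : ℝ → ℝ := fun t => (γ₁ t).2 with hfdef
  set h : ℝ → ℝ := fun t => (γ₁ t).1 - d * (γ₁ t).2 with hhdef
  set g : ℝ → ℝ := fun s => (γ₂ s).1 - d * (γ₂ s).2 with hgdef
  set e : ℝ → ℝ := fun s => (γ₂ s).2 with hedef
  have hfC : ContDiff ℝ 1 f := (contDiff_snd.comp hγ₁).of_le one_le_two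
  have hgC : ContDiff ℝ 1 g :=
    ((contDiff_fst.comp hγ₂).sub (contDiff_const.mul (contDiff_snd.comp hγ₂))).of_le one_le_two
  have hsnd₁ : HasDerivAt (fun t => (γ₁ t).2) p₁.2 t₀ := hder₁.snd
  have hfst₁ : HasDerivAt (fun t => (γ₁ t).1) p₁.1 t₀ := hder₁.fst
  have hsnd₂ : HasDerivAt (fun s => (γ₂ s).2) p₂.2 s₀ := hder₂.snd
  have hfst₂ : HasDerivAt (fun s => (γ₂ s).1) p₂.1 s₀ := hder₂.fst
  have hfd : HasDerivAt f p₁.2 t₀ := hsnd₁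
  have hhd : HasDerivAt h 0 t₀ := by
    have h0 : p₁.1 - d * p₁.2 = 0 := by rw [hddef]; field_simp; ring
    have := hfst₁.sub (hsnd₁.const_mul d)
    rw [h0] at this; exact this
  have hgd : HasDerivAt g (p₂.1 - d * p₂.2) s₀ := hfst₂.sub (hsnd₂.const_mul d)
  have hed : HasDerivAt e p₂.2 s₀ := hsnd₂
  have hft₀ : f t₀ = q.2 := rfl
  have hht₀ : h t₀ = q.1 - d * q.2 := rfl
  have hg₀ : g s₀ = q.1 - d * q.2 := by
    show (γ₂ s₀).1 - d * (γ₂ s₀).2 = q.1 - d * q.2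
    rw [← hmeet]
  have he₀ : e s₀ = q.2 := by
    show (γ₂ s₀).2 = q.2
    rw [← hmeet]
  have hmeet' : γ₂ s₀ = q := hmeet.symm
  clear_value e g h f d p₂ p₁ q
  have ha : p₂.1 - d * p₂.2 ≠ 0 := by
    rw [hddef]
    intro hcon
    apply htrans
    field_simp at hcon
    linarith [hcon, mul_comm p₂.1 p₁.2, mul_comm p₁.1 p₂.2]
  -- positivity of constants
  have habs1 : 0 < |p₁.2| := abs_pos.mpr h1y
  have habs2 : 0 < |p₂.1 - d * p₂.2| := abs_pos.mpr ha
  have hCpos : (0:ℝ) < |p₂.2| + 1 := by positivity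
  -- little-o bounds
  have hcpos : (0:ℝ) < |p₁.2| / 2 * (|p₂.1 - d * p₂.2| / 2) / (4 * (|p₂.2| + 1)) := by
    apply div_pos (mul_pos (half_pos habs1) (half_pos habs2)); positivity
  obtain ⟨δh, hδhpos, hδh⟩ := littleo_bound h t₀ 0 hhd _ hcpos
  obtain ⟨δe, hδepos, hδe⟩ := littleo_bound e s₀ p₂.2 hed 1 one_pos
  -- key for f and g
  have hderivf : deriv f t₀ = p₁.2 := hfd.deriv
  have hderivg : deriv g s₀ = p₂.1 - d * p₂.2 := hgd.deriv
  obtain ⟨δ₁, hδ₁pos, hδ₁le, Pf, If⟩ := key f t₀ hfC (by rw [hderivf]; exact h1y)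
    (min δh (min t₀ (1 - t₀))) (lt_min hδhpos (lt_min ht0a (by linarith)))
  rw [hderivf] at Pf If
  obtain ⟨δ₂, hδ₂pos, hδ₂le, Pg, Ig⟩ := key g s₀ hgC (by rw [hderivg]; exact ha)
    (min δe (min s₀ (1 - s₀))) (lt_min hδepos (lt_min hs0a (by linarith)))
  rw [hderivg] at Pg Ig
  have hδ₁h : δ₁ ≤ δh := le_trans hδ₁le (min_le_left _ _)
  have hδ₁t : δ₁ ≤ t₀ := le_trans hδ₁le (le_trans (min_le_right _ _) (min_le_left _ _))
  have hδ₁t' : δ₁ ≤ 1 - t₀ := le_trans hδ₁le (le_trans (min_le_right _ _) (min_le_right _ _))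
  have hδ₂e : δ₂ ≤ δe := le_trans hδ₂le (min_le_left _ _)
  have hδ₂s : δ₂ ≤ s₀ := le_trans hδ₂le (le_trans (min_le_right _ _) (min_le_left _ _))
  have hδ₂s' : δ₂ ≤ 1 - s₀ := le_trans hδ₂le (le_trans (min_le_right _ _) (min_le_right _ _))
  -- escape radii
  obtain ⟨ε₁, hε₁pos, hε₁⟩ := far_from γ₁ hγ₁.continuous t₀ ⟨le_of_lt ht0a, by linarith⟩ hinj₁ δ₁ hδ₁pos
  obtain ⟨ε₂, hε₂pos, hε₂⟩ := far_from γ₂ hγ₂.continuous s₀ ⟨le_of_lt hs0a, by linarith⟩ hinj₂ δ₂ hδ₂pos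
  rw [← hqdef] at hε₁
  rw [hmeet'] at hε₂
  -- main scales
  set m₁ : ℝ := |p₁.2| / 2 with hm₁def
  set m₂ : ℝ := |p₂.1 - d * p₂.2| / 2 with hm₂def
  set C : ℝ := |p₂.2| + 1 with hCdef
  set k : ℝ := m₂ / (2 * C) with hkdef
  have hm₁pos : 0 < m₁ := half_pos habs1
  have hm₂pos : 0 < m₂ := half_pos habs2
  have hCpos' : 0 < C := hCdef ▸ hCpos
  have hkpos : 0 < k := hkdef ▸ div_pos hm₂pos (by linarith)
  clear_value k C m₂ m₁
  set E : ℝ := min ε₁ ε₂ with hEdef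
  have hEpos : 0 < E := lt_min hε₁pos hε₂pos
  have hEε₁ : E ≤ ε₁ := min_le_left _ _
  have hEε₂ : E ≤ ε₂ := min_le_right _ _
  clear_value E
  have hdenpos : (0:ℝ) < k + |d| + 1 := by have := abs_nonneg d; linarith
  set H : ℝ := min (m₁ * δ₁) (min (m₂ * δ₂ / k) (E / (2 * (k + |d| + 1)))) with hHdef
  have hHpos : 0 < H := by
    apply lt_min (mul_pos hm₁pos hδ₁pos)
    exact lt_min (div_pos (mul_pos hm₂pos hδ₂pos) hkpos) (div_pos hEpos (by linarith))
  have hH1 : H ≤ m₁ * δ₁ := min_le_left _ _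
  have hH2' : H ≤ m₂ * δ₂ / k := le_trans (min_le_right _ _) (min_le_left _ _)
  have hH3' : H ≤ E / (2 * (k + |d| + 1)) := le_trans (min_le_right _ _) (min_le_right _ _)
  clear_value H
  set L : ℝ := k * H with hLdef
  have hLpos : 0 < L := mul_pos hkpos hHpos
  have hH2 : L ≤ m₂ * δ₂ := by
    rw [hLdef]
    calc k * H ≤ k * (m₂ * δ₂ / k) := mul_le_mul_of_nonneg_left hH2' hkpos.le
      _ = m₂ * δ₂ := by field_simp
  have hH3 : H * (k + |d| + 1) ≤ E / 2 := by
    rw [le_div_iff₀ (by linarith)] at hH3'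
    linarith
  clear_value L
  -- the parallelogram is inside the small ball
  have hsub : ∀ x ∈ paraSet q d L H, dist x q ≤ E / 2 := by
    rintro x ⟨u, v, hu, hv, rfl⟩
    rw [Prod.dist_eq]
    apply max_le
    · rw [Real.dist_eq]
      have : q.1 + u + v * d - q.1 = u + v * d := by ring
      rw [this]
      calc |u + v * d| ≤ |u| + |v| * |d| := by
            calc |u + v * d| ≤ |u| + |v * d| := abs_add_le _ _
              _ = |u| + |v| * |d| := by rw [abs_mul]
        _ ≤ L + H * |d| := add_le_add hu (mul_le_mul_of_nonneg_right hv (abs_nonneg d))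
        _ ≤ H * (k + |d| + 1) := by
            have h9 : H * (k + |d| + 1) = k * H + H * |d| + H := by ring
            rw [hLdef, h9]; linarith
        _ ≤ E / 2 := hH3
    · rw [Real.dist_eq]
      have : q.2 + v - q.2 = v := by ring
      rw [this]
      calc |v| ≤ H := hv
        _ ≤ H * (k + |d| + 1) := by
            have h9 : H * (k + |d| + 1) = H * (k + |d|) + H := by ring
            have h10 : 0 ≤ H * (k + |d|) :=
              mul_nonneg hHpos.le (add_nonneg hkpos.le (abs_nonneg d))
            rw [h9]; linarith
        _ ≤ E / 2 := hH3
  -- confinement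
  have conf₁ : ∀ t ∈ Icc (0:ℝ) 1, γ₁ t ∈ paraSet q d L H → t ∈ Icc (t₀ - δ₁) (t₀ + δ₁) := by
    intro t ht hmem
    have := hε₁ t ht (lt_of_le_of_lt (hsub _ hmem) (by linarith))
    rw [abs_le] at this
    exact ⟨by linarith [this.1], by linarith [this.2]⟩
  have conf₂ : ∀ s ∈ Icc (0:ℝ) 1, γ₂ s ∈ paraSet q d L H → s ∈ Icc (s₀ - δ₂) (s₀ + δ₂) := by
    intro s hs hmem
    have := hε₂ s hs (lt_of_le_of_lt (hsub _ hmem) (by linarith))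
    rw [abs_le] at this
    exact ⟨by linarith [this.1], by linarith [this.2]⟩
    -- sides and corners are inside the parallelogram
  have hsideH : ∀ e₂ : ℝ, |e₂| = 1 → ∀ x : ℝ × ℝ,
      x.2 = q.2 + e₂ * H → |x.1 - (q.1 + e₂ * H * d)| ≤ L → x ∈ paraSet q d L H := by
    intro e₂ he₂ x hy hx
    refine ⟨x.1 - (q.1 + e₂ * H * d), e₂ * H, hx, ?_, ?_⟩
    · rw [abs_mul, he₂, one_mul, abs_of_pos hHpos]
    · have hxx : x = (x.1, x.2) := rfl
      rw [hxx, hy, Prod.mk.injEq]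
      exact ⟨by ring, by ring⟩
  have hsideV : ∀ e₁ : ℝ, |e₁| = 1 → ∀ x : ℝ × ℝ,
      x.1 - d * (x.2 - q.2) = q.1 + e₁ * L → |x.2 - q.2| ≤ H → x ∈ paraSet q d L H := by
    intro e₁ he₁ x hx hy
    refine ⟨e₁ * L, x.2 - q.2, ?_, hy, ?_⟩
    · rw [abs_mul, he₁, one_mul, abs_of_pos hLpos]
    · have hxx : x = (x.1, x.2) := rfl
      rw [hxx, Prod.mk.injEq]
      constructor
      · have : x.1 = q.1 + e₁ * L + d * (x.2 - q.2) := by linarith only [hx]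
        rw [this]; ring
      · ring
  have hcornerMem : ∀ e₁ e₂ : ℝ, |e₁| = 1 → |e₂| = 1 →
      paraCorner q d L H e₁ e₂ ∈ paraSet q d L H := by
    intro e₁ e₂ he₁ he₂
    refine ⟨e₁ * L, e₂ * H, ?_, ?_, rfl⟩
    · rw [abs_mul, he₁, one_mul, abs_of_pos hLpos]
    · rw [abs_mul, he₂, one_mul, abs_of_pos hHpos]
  have hC0 : C ≠ 0 := ne_of_gt hCpos'
  have hm₂0 : m₂ ≠ 0 := ne_of_gt hm₂pos
  -- the key quantitative estimates
  have hEst₁ : ∀ t ∈ Icc (t₀ - δ₁) (t₀ + δ₁), |f t - q.2| ≤ H → |h t - h t₀| ≤ k * H / 2 := by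
    intro t htI hft
    have hP := Pf htI (⟨by linarith, by linarith⟩ : t₀ ∈ Icc (t₀ - δ₁) (t₀ + δ₁))
    rw [hft₀] at hP
    have htb : m₁ * |t - t₀| ≤ H := le_trans hP hft
    have habs : |t - t₀| ≤ δ₁ := by
      rw [abs_le]; exact ⟨by linarith [htI.1], by linarith [htI.2]⟩
    have hh := hδh t (le_trans habs hδ₁h)
    rw [mul_zero, sub_zero] at hh
    have heq : m₁ * m₂ / (4 * C) * |t - t₀| = m₂ / (4 * C) * (m₁ * |t - t₀|) := by ring
    have hle : m₂ / (4 * C) * (m₁ * |t - t₀|) ≤ m₂ / (4 * C) * H :=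
      mul_le_mul_of_nonneg_left htb (div_nonneg hm₂pos.le (by linarith))
    have heq2 : m₂ / (4 * C) * H = k * H / 2 := by
      rw [hkdef]; field_simp; ring
    calc |h t - h t₀| ≤ m₁ * m₂ / (4 * C) * |t - t₀| := hh
      _ = m₂ / (4 * C) * (m₁ * |t - t₀|) := heq
      _ ≤ m₂ / (4 * C) * H := hle
      _ = k * H / 2 := heq2
  have hEst₂ : ∀ s ∈ Icc (s₀ - δ₂) (s₀ + δ₂), |g s - g s₀| ≤ L → |e s - q.2| ≤ H / 2 := by
    intro s hsI hgs
    have hP := Pg hsI (⟨by linarith, by linarith⟩ : s₀ ∈ Icc (s₀ - δ₂) (s₀ + δ₂))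
    have hsb : m₂ * |s - s₀| ≤ L := le_trans hP hgs
    have habs : |s - s₀| ≤ δ₂ := by
      rw [abs_le]; exact ⟨by linarith [hsI.1], by linarith [hsI.2]⟩
    have hee := hδe s (le_trans habs hδ₂e)
    have h1 : |e s - e s₀| ≤ C * |s - s₀| := by
      have h2 : |e s - e s₀| ≤ |e s - e s₀ - (s - s₀) * p₂.2| + |(s - s₀) * p₂.2| := by
        calc |e s - e s₀| = |(e s - e s₀ - (s - s₀) * p₂.2) + (s - s₀) * p₂.2| := by ring_nf
          _ ≤ _ := abs_add_le _ _
      rw [abs_mul] at h2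
      have h3 : |(s - s₀)| * |p₂.2| = |p₂.2| * |s - s₀| := mul_comm _ _
      rw [hCdef]
      calc |e s - e s₀| ≤ 1 * |s - s₀| + |s - s₀| * |p₂.2| := by linarith [hee]
        _ = (|p₂.2| + 1) * |s - s₀| := by ring
    have h2 : C * |s - s₀| = (C / m₂) * (m₂ * |s - s₀|) := by field_simp
    have h3 : (C / m₂) * (m₂ * |s - s₀|) ≤ (C / m₂) * L :=
      mul_le_mul_of_nonneg_left hsb (div_nonneg hCpos'.le hm₂pos.le)
    have h4 : (C / m₂) * L = H / 2 := by
      rw [hLdef, hkdef]; field_simp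
    rw [← he₀]
    calc |e s - e s₀| ≤ C * |s - s₀| := h1
      _ = (C / m₂) * (m₂ * |s - s₀|) := h2
      _ ≤ (C / m₂) * L := h3
      _ = H / 2 := h4
  -- coordinate conversion identities
  have hconv : ∀ t : ℝ, ∀ e₂ : ℝ, f t = q.2 + e₂ * H →
      (γ₁ t).1 - (q.1 + e₂ * H * d) = h t - h t₀ := by
    intro t e₂ hft
    simp only [hfdef] at hft
    have h1 : h t = (γ₁ t).1 - d * (γ₁ t).2 := by rw [hhdef]
    rw [h1, hht₀, hft]; ring
  have hgconv : ∀ s : ℝ, (γ₂ s).1 - d * ((γ₂ s).2 - q.2) = g s + d * q.2 := by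
    intro s; simp only [hgdef]; ring
  -- membership characterisations
  have hmemH : ∀ (t : ℝ) (e₂ : ℝ), |e₂| = 1 →
      (γ₁ t ∈ segment ℝ (paraCorner q d L H (-1) e₂) (paraCorner q d L H 1 e₂) ↔
        f t = q.2 + e₂ * H ∧ |h t - h t₀| ≤ L) := by
    intro t e₂ _
    rw [mem_horiz_side hLpos]
    constructor
    · rintro ⟨hy, hx⟩
      have hft : f t = q.2 + e₂ * H := by simp only [hfdef]; exact hy
      exact ⟨hft, by rw [← hconv t e₂ hft]; exact hx⟩
    · rintro ⟨hft, hx⟩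
      have hy : (γ₁ t).2 = q.2 + e₂ * H := by simp only [hfdef] at hft; exact hft
      exact ⟨hy, by rw [hconv t e₂ hft]; exact hx⟩
  have hmemV : ∀ (s : ℝ) (e₁ : ℝ), |e₁| = 1 →
      (γ₂ s ∈ segment ℝ (paraCorner q d L H e₁ (-1)) (paraCorner q d L H e₁ 1) ↔
        g s = g s₀ + e₁ * L ∧ |e s - q.2| ≤ H) := by
    intro s e₁ _
    rw [mem_vert_side hHpos]
    constructor
    · rintro ⟨hx, hy⟩
      rw [hgconv s] at hx
      constructor
      · rw [hg₀]; linarith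
      · simp only [hedef]; exact hy
    · rintro ⟨hgs, hy⟩
      constructor
      · rw [hgconv s, hgs, hg₀]; ring
      · simp only [hedef] at hy; exact hy
  -- top and bottom crossings
  have topbot : ∀ e₂ : ℝ, |e₂| = 1 → ∃! t, t ∈ Icc (0:ℝ) 1 ∧
      γ₁ t ∈ segment ℝ (paraCorner q d L H (-1) e₂) (paraCorner q d L H 1 e₂) := by
    intro e₂ he₂
    obtain ⟨t₁, ht₁I, ht₁f⟩ := If (q.2 + e₂ * H) (by
      rw [hft₀, show q.2 + e₂ * H - q.2 = e₂ * H by ring, abs_mul, he₂, one_mul,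
        abs_of_pos hHpos]
      exact hH1)
    have ht₁01 : t₁ ∈ Icc (0:ℝ) 1 := ⟨by linarith [ht₁I.1], by linarith [ht₁I.2]⟩
    have hft1 : |f t₁ - q.2| ≤ H := by
      rw [ht₁f, show q.2 + e₂ * H - q.2 = e₂ * H by ring, abs_mul, he₂, one_mul,
        abs_of_pos hHpos]
    have hest := hEst₁ t₁ ht₁I hft1
    have hkH : 0 < k * H := mul_pos hkpos hHpos
    have hmem := (hmemH t₁ e₂ he₂).mpr ⟨ht₁f, by rw [hLdef]; linarith only [hest, hkH]⟩
    refine ⟨t₁, ⟨ht₁01, hmem⟩, ?_⟩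
    rintro t' ⟨ht'01, ht'mem⟩
    obtain ⟨hft', hht'⟩ := (hmemH t' e₂ he₂).mp ht'mem
    have hps : γ₁ t' ∈ paraSet q d L H :=
      hsideH e₂ he₂ (γ₁ t') (by simp only [hfdef] at hft'; exact hft')
        (by rw [hconv t' e₂ hft']; exact hht')
    have ht'I := conf₁ t' ht'01 hps
    have hzero := Pf ht'I ht₁I
    rw [hft', ht₁f, sub_self, abs_zero] at hzero
    have hz2 : m₁ * |t' - t₁| = 0 :=
      le_antisymm hzero (mul_nonneg hm₁pos.le (abs_nonneg _))
    have h0 := (mul_eq_zero.mp hz2).resolve_left (ne_of_gt hm₁pos)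
    exact sub_eq_zero.mp (abs_eq_zero.mp h0)
  -- left and right crossings
  have leftright : ∀ e₁ : ℝ, |e₁| = 1 → ∃! s, s ∈ Icc (0:ℝ) 1 ∧
      γ₂ s ∈ segment ℝ (paraCorner q d L H e₁ (-1)) (paraCorner q d L H e₁ 1) := by
    intro e₁ he₁
    obtain ⟨s₁, hs₁I, hs₁g⟩ := Ig (g s₀ + e₁ * L) (by
      rw [show g s₀ + e₁ * L - g s₀ = e₁ * L by ring, abs_mul, he₁, one_mul,
        abs_of_pos hLpos]
      exact hH2)
    have hs₁01 : s₁ ∈ Icc (0:ℝ) 1 := ⟨by linarith [hs₁I.1], by linarith [hs₁I.2]⟩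
    have hgs1 : |g s₁ - g s₀| ≤ L := by
      rw [hs₁g, show g s₀ + e₁ * L - g s₀ = e₁ * L by ring, abs_mul, he₁, one_mul,
        abs_of_pos hLpos]
    have hest := hEst₂ s₁ hs₁I hgs1
    have hmem := (hmemV s₁ e₁ he₁).mpr ⟨hs₁g, by linarith only [hest, hHpos]⟩
    refine ⟨s₁, ⟨hs₁01, hmem⟩, ?_⟩
    rintro s' ⟨hs'01, hs'mem⟩
    obtain ⟨hgs', hes'⟩ := (hmemV s' e₁ he₁).mp hs'mem
    have hps : γ₂ s' ∈ paraSet q d L H :=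
      hsideV e₁ he₁ (γ₂ s') (by rw [hgconv s', hgs', hg₀]; ring)
        (by simp only [hedef] at hes'; exact hes')
    have hs'I := conf₂ s' hs'01 hps
    have hzero := Pg hs'I hs₁I
    rw [hgs', hs₁g, sub_self, abs_zero] at hzero
    have hz2 : m₂ * |s' - s₁| = 0 :=
      le_antisymm hzero (mul_nonneg hm₂pos.le (abs_nonneg _))
    have h0 := (mul_eq_zero.mp hz2).resolve_left (ne_of_gt hm₂pos)
    exact sub_eq_zero.mp (abs_eq_zero.mp h0)
  -- corner avoidance
  have hcor₁ : ∀ t ∈ Icc (0:ℝ) 1, γ₁ t ∉ paraCorners q d L H := by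
    intro t ht hmem
    have keyc : ∀ e₁ e₂ : ℝ, |e₁| = 1 → |e₂| = 1 → γ₁ t ≠ paraCorner q d L H e₁ e₂ := by
      intro e₁ e₂ he₁ he₂ heq
      have hps : γ₁ t ∈ paraSet q d L H := heq ▸ hcornerMem e₁ e₂ he₁ he₂
      have htI := conf₁ t ht hps
      have hy : (γ₁ t).2 = q.2 + e₂ * H := by rw [heq]; rfl
      have hft : f t = q.2 + e₂ * H := by simp only [hfdef]; exact hy
      have hft1 : |f t - q.2| ≤ H := by
        rw [hft, show q.2 + e₂ * H - q.2 = e₂ * H by ring, abs_mul, he₂, one_mul,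
          abs_of_pos hHpos]
      have hest := hEst₁ t htI hft1
      have hx : (γ₁ t).1 = q.1 + e₁ * L + e₂ * H * d := by rw [heq]; rfl
      have hcv := hconv t e₂ hft
      rw [hx] at hcv
      have hL' : h t - h t₀ = e₁ * L := by linarith only [hcv]
      have habsL : |h t - h t₀| = L := by
        rw [hL', abs_mul, he₁, one_mul, abs_of_pos hLpos]
      rw [habsL, hLdef] at hest
      have hkh := mul_pos hkpos hHpos
      linarith only [hest, hkh]
    simp only [paraCorners, mem_insert_iff, mem_singleton_iff] at hmem
    have hn : |(-1 : ℝ)| = 1 := by rw [abs_neg, abs_one]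
    rcases hmem with hmm | hmm | hmm | hmm
    exacts [keyc 1 1 abs_one abs_one hmm, keyc 1 (-1) abs_one hn hmm,
      keyc (-1) 1 hn abs_one hmm, keyc (-1) (-1) hn hn hmm]
  have hcor₂ : ∀ s ∈ Icc (0:ℝ) 1, γ₂ s ∉ paraCorners q d L H := by
    intro s hs hmem
    have keyc : ∀ e₁ e₂ : ℝ, |e₁| = 1 → |e₂| = 1 → γ₂ s ≠ paraCorner q d L H e₁ e₂ := by
      intro e₁ e₂ he₁ he₂ heq
      have hps : γ₂ s ∈ paraSet q d L H := heq ▸ hcornerMem e₁ e₂ he₁ he₂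
      have hsI := conf₂ s hs hps
      have hx : (γ₂ s).1 = q.1 + e₁ * L + e₂ * H * d := by rw [heq]; rfl
      have hy : (γ₂ s).2 = q.2 + e₂ * H := by rw [heq]; rfl
      have hgs : g s = g s₀ + e₁ * L := by
        have hgl : g s = (γ₂ s).1 - d * (γ₂ s).2 := by rw [hgdef]
        rw [hgl, hx, hy, hg₀]; ring
      have hgs1 : |g s - g s₀| ≤ L := by
        rw [hgs, show g s₀ + e₁ * L - g s₀ = e₁ * L by ring, abs_mul, he₁, one_mul,
          abs_of_pos hLpos]
      have hest := hEst₂ s hsI hgs1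
      have hes : |e s - q.2| = H := by
        simp only [hedef]
        rw [hy, show q.2 + e₂ * H - q.2 = e₂ * H by ring, abs_mul, he₂, one_mul,
          abs_of_pos hHpos]
      rw [hes] at hest
      linarith only [hest, hHpos]
    simp only [paraCorners, mem_insert_iff, mem_singleton_iff] at hmem
    have hn : |(-1 : ℝ)| = 1 := by rw [abs_neg, abs_one]
    rcases hmem with hmm | hmm | hmm | hmm
    exacts [keyc 1 1 abs_one abs_one hmm, keyc 1 (-1) abs_one hn hmm,
      keyc (-1) 1 hn abs_one hmm, keyc (-1) (-1) hn hn hmm]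
  -- the centre is interior
  have hint : q ∈ interior (paraSet q d L H) := by
    rw [mem_interior]
    have hdpos : (0:ℝ) < 1 + |d| := by have := abs_nonneg d; linarith
    refine ⟨Metric.ball q (min H (L / (1 + |d|))), ?_, Metric.isOpen_ball,
      Metric.mem_ball_self (lt_min hHpos (div_pos hLpos hdpos))⟩
    intro x hx
    rw [Metric.mem_ball, Prod.dist_eq, max_lt_iff] at hx
    obtain ⟨hx1, hx2⟩ := hx
    rw [Real.dist_eq] at hx1 hx2
    refine ⟨x.1 - q.1 - (x.2 - q.2) * d, x.2 - q.2, ?_, ?_, ?_⟩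
    · have hr1 : |x.1 - q.1| < L / (1 + |d|) := lt_of_lt_of_le hx1 (min_le_right _ _)
      have hr2 : |x.2 - q.2| < L / (1 + |d|) := lt_of_lt_of_le hx2 (min_le_right _ _)
      have h5 : |x.1 - q.1 - (x.2 - q.2) * d| ≤ |x.1 - q.1| + |x.2 - q.2| * |d| := by
        calc |x.1 - q.1 - (x.2 - q.2) * d| ≤ |x.1 - q.1| + |(x.2 - q.2) * d| :=
              abs_sub _ _
          _ = |x.1 - q.1| + |x.2 - q.2| * |d| := by rw [abs_mul]
      have h6 : |x.2 - q.2| * |d| ≤ (L / (1 + |d|)) * |d| :=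
        mul_le_mul_of_nonneg_right hr2.le (abs_nonneg d)
      have h7 : L / (1 + |d|) + (L / (1 + |d|)) * |d| = L := by field_simp
      linarith only [h5, h6, h7, hr1]
    · exact (lt_of_lt_of_le hx2 (min_le_left _ _)).le
    · have hxx : x = (x.1, x.2) := rfl
      rw [hxx, Prod.mk.injEq]
      exact ⟨by ring, by ring⟩
  refine ⟨d, L, H, hLpos, hHpos, hint, Or.inl ⟨?_, ?_, ?_, ?_, hcor₁, hcor₂⟩⟩
  · exact topbot 1 abs_one
  · exact topbot (-1) (by rw [abs_neg, abs_one])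
  · exact leftright (-1) (by rw [abs_neg, abs_one])
  · exact leftright 1 abs_one
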